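/- Let Y be a complex Banach space, let Z be a bounded operator on Y, let K ⊆ iℝ be compact with σ(Z) ⊆ K, and let Ψ : C(K) → L(Y) be a continuous unital algebra homomorphism with Ψ(ι) = Z, where ι(z) = z. Then for every g ∈ C(K), σ(Ψ(g)) = g(σ(Z)) := {g(w) : w ∈ σ(Z)}. -/

import Mathlib

open Complex MeasureTheory Filter Topology
open scoped ENNReal NNReal Classical

noncomputable section

section AuxiliaryLemmas

open Bornology Metric

set_option maxHeartbeats 8000000

/-- conj w * w = ‖w‖² -/
lemma conj_mul_self' (w : ℂ) : (starRingEnd ℂ) w * w = ((‖w‖^2 : ℝ) : ℂ) := by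
  rw [mul_comm, Complex.mul_conj, Complex.normSq_eq_norm_sq]

lemma cont_aux {K : Set ℂ} (f : C(↥K, ℂ)) {μ : ℂ}
    (hμ : μ ∉ closure (Subtype.val '' Function.support f)) (n : ℕ) :
    Continuous fun z : ↥K => f z * (((z : ℂ) - μ)⁻¹) ^ n := by
  rw [continuous_iff_continuousAt]
  intro z₀
  by_cases h : (z₀ : ℂ) = μ
  · obtain ⟨ε, hε, hball⟩ : ∃ ε > 0, ∀ w ∈ Subtype.val '' Function.support f, ¬ dist μ w < ε := by
      by_contra hc
      push_neg at hc
      exact hμ (Metric.mem_closure_iff.mpr fun ε hε => by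
        obtain ⟨w, hw1, hw2⟩ := hc ε hε; exact ⟨w, hw1, hw2⟩)
    have hU : IsOpen {z : ↥K | dist μ (z : ℂ) < ε} :=
      isOpen_lt (by fun_prop) continuous_const
    have hz₀ : z₀ ∈ {z : ↥K | dist μ (z : ℂ) < ε} := by
      simp [Set.mem_setOf_eq, h, hε]
    have hev : (fun z : ↥K => f z * (((z : ℂ) - μ)⁻¹) ^ n) =ᶠ[𝓝 z₀] fun _ => 0 := by
      filter_upwards [hU.mem_nhds hz₀] with z hz
      have hfz : f z = 0 := by
        by_contra hfz
        exact hball (z : ℂ) ⟨z, hfz, rfl⟩ hz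
      rw [hfz, zero_mul]
    exact ContinuousAt.congr continuousAt_const hev.symm
  · exact (f.continuous.continuousAt.mul
      ((((continuous_subtype_val.sub continuous_const).continuousAt).inv₀
        (sub_ne_zero.mpr h)).pow n))

set_option maxHeartbeats 1000000 in
lemma calc_vanish {X : Type*} [NormedAddCommGroup X] [NormedSpace ℂ X] [CompleteSpace X]
    {K : Set ℂ} (hK : IsCompact K) (Z : X →L[ℂ] X)
    (Φ : C(↥K, ℂ) →L[ℂ] (X →L[ℂ] X))
    (hmul : ∀ g h : C(↥K, ℂ), Φ (g * h) = Φ g * Φ h)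
    (hone : Φ 1 = 1)
    (hι : Φ ⟨fun z => (z : ℂ), continuous_subtype_val⟩ = Z)
    (f : C(↥K, ℂ))
    (hdisj : ∀ μ ∈ spectrum ℂ Z, μ ∉ closure (Subtype.val '' Function.support f)) :
    Φ f = 0 := by
  classical
  haveI : CompactSpace ↥K := isCompact_iff_compactSpace.mp hK
  by_cases hf0 : f = 0
  · simp [hf0]
  set S := closure (Subtype.val '' Function.support f) with hSdef
  have hScl : IsClosed S := isClosed_closure
  have hSK : S ⊆ K := by
    refine closure_minimal ?_ hK.isClosed
    rintro w ⟨z, _, rfl⟩; exact z.2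
  have hSne : S.Nonempty := by
    obtain ⟨z, hz⟩ : ∃ z, f z ≠ 0 := by
      by_contra h
      push_neg at h
      exact hf0 (ContinuousMap.ext fun z => h z)
    exact ⟨z, subset_closure ⟨z, hz, rfl⟩⟩
  have hzero : ∀ μ, μ ∉ S → ∀ z : ↥K, (z : ℂ) = μ → f z = 0 := by
    intro μ hμ z hz
    by_contra hfz
    exact hμ (subset_closure ⟨z, hfz, hz⟩)
  -- the family of functions z ↦ f z / (z - μ)
  set qfun : ℂ → ↥K → ℂ := fun μ z => f z * ((z : ℂ) - μ)⁻¹ with hqfun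
  have hqcont : ∀ μ, μ ∉ S → Continuous (qfun μ) := by
    intro μ hμ
    simpa [hqfun] using cont_aux f hμ 1
  set qc : ℂ → C(↥K, ℂ) := fun μ => if h : Continuous (qfun μ) then ⟨qfun μ, h⟩ else 0 with hqcdef
  have hqc_eq : ∀ μ, μ ∉ S → ∀ z : ↥K, qc μ z = f z * ((z : ℂ) - μ)⁻¹ := by
    intro μ hμ z
    simp only [hqcdef, dif_pos (hqcont μ hμ)]
    rfl
  set A : ℂ → (X →L[ℂ] X) := fun μ => algebraMap ℂ _ μ - Z with hAdef
  have hA : ∀ μ, A μ = Φ (μ • 1 - ⟨fun z => (z : ℂ), continuous_subtype_val⟩) := by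
    intro μ
    simp only [hAdef, _root_.map_sub, _root_.map_smul, hone, hι, Algebra.algebraMap_eq_smul_one]
  have hkey : ∀ μ, μ ∉ S → A μ * Φ (qc μ) = -Φ f := by
    intro μ hμ
    rw [hA, ← hmul, ← _root_.map_neg]
    congr 1
    ext z
    simp only [ContinuousMap.mul_apply, ContinuousMap.sub_apply, ContinuousMap.smul_apply,
      ContinuousMap.one_apply, ContinuousMap.coe_mk, ContinuousMap.neg_apply, smul_eq_mul, mul_one]
    rw [hqc_eq μ hμ z]
    by_cases hz : (z : ℂ) = μ
    · rw [hzero μ hμ z hz]; ring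
    · have hne : (z : ℂ) - μ ≠ 0 := sub_ne_zero.mpr hz
      field_simp
      ring
  set H : ℂ → (X →L[ℂ] X) := fun μ =>
    if μ ∈ spectrum ℂ Z then Φ (qc μ) else -(Ring.inverse (A μ) * Φ f) with hHdef
  have hHq : ∀ μ, μ ∉ S → H μ = Φ (qc μ) := by
    intro μ hμ
    by_cases hσ : μ ∈ spectrum ℂ Z
    · simp only [hHdef, if_pos hσ]
    · have hu : IsUnit (A μ) := spectrum.notMem_iff.mp hσ
      have h2 : Φ (qc μ) = -(Ring.inverse (A μ) * Φ f) := by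
        calc Φ (qc μ) = Ring.inverse (A μ) * (A μ * Φ (qc μ)) := by
              rw [← mul_assoc, Ring.inverse_mul_cancel _ hu, one_mul]
          _ = -(Ring.inverse (A μ) * Φ f) := by rw [hkey μ hμ, mul_neg]
      simp only [hHdef, if_neg hσ, h2]
  have hHres : ∀ μ, μ ∉ spectrum ℂ Z → H μ = -(Ring.inverse (A μ) * Φ f) := by
    intro μ hμ
    simp only [hHdef, if_neg hμ]
  -- differentiability near points off S
  have hdiffS : ∀ μ₀, μ₀ ∉ S → DifferentiableAt ℂ (fun μ => Φ (qc μ)) μ₀ := by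
    intro μ₀ hμ₀
    have hd : 0 < infDist μ₀ S := (hScl.notMem_iff_infDist_pos hSne).mp hμ₀
    set d := infDist μ₀ S with hddef
    have hdist : ∀ z : ↥K, f z ≠ 0 → d ≤ ‖(z : ℂ) - μ₀‖ := by
      intro z hz
      have : (z : ℂ) ∈ S := subset_closure ⟨z, hz, rfl⟩
      calc d ≤ dist μ₀ (z : ℂ) := infDist_le_dist_of_mem this
        _ = ‖(z : ℂ) - μ₀‖ := by rw [dist_eq_norm, norm_sub_rev]
    have hnotS : ∀ μ : ℂ, ‖μ - μ₀‖ < d / 2 → μ ∉ S := by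
      intro μ hμ hc
      have : d ≤ dist μ₀ μ := infDist_le_dist_of_mem hc
      rw [dist_eq_norm, norm_sub_rev] at this
      linarith
    set q2 : C(↥K, ℂ) := ⟨fun z => f z * (((z : ℂ) - μ₀)⁻¹) ^ 2, cont_aux f hμ₀ 2⟩ with hq2def
    set M := ‖Φ‖ * (‖f‖ * ((d / 2)⁻¹ * (d⁻¹) ^ 2)) with hMdef
    have hM0 : 0 ≤ M := by positivity
    -- the main quadratic estimate
    have hquad : ∀ μ : ℂ, ‖μ - μ₀‖ < d / 2 →
        ‖qc μ - qc μ₀ - (μ - μ₀) • q2‖ ≤ (‖f‖ * ((d / 2)⁻¹ * (d⁻¹) ^ 2)) * ‖μ - μ₀‖ ^ 2 := by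
      intro μ hμ
      have hμS : μ ∉ S := hnotS μ hμ
      apply (ContinuousMap.norm_le _ (by positivity)).mpr
      intro z
      simp only [ContinuousMap.sub_apply, ContinuousMap.smul_apply, smul_eq_mul]
      rw [hqc_eq μ hμS z, hqc_eq μ₀ hμ₀ z, hq2def]
      simp only [ContinuousMap.coe_mk]
      by_cases hfz : f z = 0
      · rw [hfz]
        simp only [zero_mul, sub_zero, mul_zero, sub_self, norm_zero]
        positivity
      · have ha : d ≤ ‖(z : ℂ) - μ₀‖ := hdist z hfz
        have ha0 : (z : ℂ) - μ₀ ≠ 0 := by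
          intro h; rw [h, norm_zero] at ha; linarith
        have hb : d / 2 ≤ ‖(z : ℂ) - μ‖ := by
          have hzz : (z : ℂ) - μ = ((z : ℂ) - μ₀) - (μ - μ₀) := by ring
          rw [hzz]
          calc d / 2 = d - d / 2 := by ring
            _ ≤ ‖(z : ℂ) - μ₀‖ - ‖μ - μ₀‖ := by linarith
            _ ≤ ‖((z : ℂ) - μ₀) - (μ - μ₀)‖ := norm_sub_norm_le _ _
        have hb0 : (z : ℂ) - μ ≠ 0 := by
          intro h; rw [h, norm_zero] at hb; linarith
        have hid : ((z : ℂ) - μ)⁻¹ - ((z : ℂ) - μ₀)⁻¹ - (μ - μ₀) * (((z : ℂ) - μ₀)⁻¹) ^ 2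
            = (μ - μ₀) ^ 2 * (((z : ℂ) - μ)⁻¹ * (((z : ℂ) - μ₀)⁻¹) ^ 2) := by
          field_simp
          ring
        have hexp : f z * ((z : ℂ) - μ)⁻¹ - f z * ((z : ℂ) - μ₀)⁻¹
              - (μ - μ₀) * (f z * (((z : ℂ) - μ₀)⁻¹) ^ 2)
            = f z * ((μ - μ₀) ^ 2 * (((z : ℂ) - μ)⁻¹ * (((z : ℂ) - μ₀)⁻¹) ^ 2)) := by
          rw [← hid]; ring
        rw [hexp]
        rw [norm_mul, norm_mul, norm_mul, norm_pow, norm_pow, norm_inv, norm_inv]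
        calc ‖f z‖ * (‖μ - μ₀‖ ^ 2 * (‖(z : ℂ) - μ‖⁻¹ * (‖(z : ℂ) - μ₀‖⁻¹) ^ 2))
            ≤ ‖f‖ * (‖μ - μ₀‖ ^ 2 * ((d / 2)⁻¹ * (d⁻¹) ^ 2)) := by
              gcongr <;> first
                | exact f.norm_coe_le_norm z
                | exact hb
                | exact ha
                | positivity
          _ = ‖f‖ * ((d / 2)⁻¹ * (d⁻¹) ^ 2) * ‖μ - μ₀‖ ^ 2 := by ring
    -- HasDerivAt via little-o
    have hder : HasDerivAt (fun μ => Φ (qc μ)) (Φ q2) μ₀ := by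
      rw [hasDerivAt_iff_isLittleO, Asymptotics.isLittleO_iff]
      intro ε hε
      have hev : ∀ᶠ μ in 𝓝 μ₀, ‖μ - μ₀‖ < min (d / 2) (ε / (M + 1)) := by
        filter_upwards [Metric.ball_mem_nhds μ₀ (by positivity : (0:ℝ) < min (d / 2) (ε / (M + 1)))]
          with μ hμ
        rwa [Metric.mem_ball, dist_eq_norm] at hμ
      filter_upwards [hev] with μ hμ
      have hμ1 : ‖μ - μ₀‖ < d / 2 := lt_of_lt_of_le hμ (min_le_left _ _)
      have hμ2 : ‖μ - μ₀‖ ≤ ε / (M + 1) := le_of_lt (lt_of_lt_of_le hμ (min_le_right _ _))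
      have h1 : Φ (qc μ) - Φ (qc μ₀) - (μ - μ₀) • Φ q2
          = Φ (qc μ - qc μ₀ - (μ - μ₀) • q2) := by
        rw [_root_.map_sub, _root_.map_sub, _root_.map_smul]
      rw [h1]
      have h3 : (0:ℝ) ≤ ‖μ - μ₀‖ := norm_nonneg _
      have h4 : M * ‖μ - μ₀‖ ≤ ε := by
        have h5 : M * (ε / (M + 1)) ≤ ε := by
          rw [mul_div_assoc', div_le_iff₀ (by positivity)]
          nlinarith
        nlinarith
      calc ‖Φ (qc μ - qc μ₀ - (μ - μ₀) • q2)‖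
          ≤ ‖Φ‖ * ‖qc μ - qc μ₀ - (μ - μ₀) • q2‖ := Φ.le_opNorm _
        _ ≤ ‖Φ‖ * ((‖f‖ * ((d / 2)⁻¹ * (d⁻¹) ^ 2)) * ‖μ - μ₀‖ ^ 2) := by
            gcongr
            exact hquad μ hμ1
        _ = (M * ‖μ - μ₀‖) * ‖μ - μ₀‖ := by rw [hMdef]; ring
        _ ≤ ε * ‖μ - μ₀‖ := mul_le_mul_of_nonneg_right h4 h3
    exact hder.differentiableAt
  -- H is differentiable everywhere
  have hHdiff : Differentiable ℂ H := by
    intro μ₀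
    by_cases hσ : μ₀ ∈ spectrum ℂ Z
    · have hμ₀S : μ₀ ∉ S := hdisj μ₀ hσ
      have hev : (fun μ => Φ (qc μ)) =ᶠ[𝓝 μ₀] H := by
        filter_upwards [hScl.isOpen_compl.mem_nhds hμ₀S] with μ hμ
        exact (hHq μ hμ).symm
      exact hev.differentiableAt_iff.mp (hdiffS μ₀ hμ₀S)
    · have hres : IsOpen {μ : ℂ | μ ∉ spectrum ℂ Z} := (spectrum.isClosed (𝕜 := ℂ) Z).isOpen_compl
      have hev : (fun μ => -(Ring.inverse (A μ) * Φ f)) =ᶠ[𝓝 μ₀] H := by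
        filter_upwards [hres.mem_nhds hσ] with μ hμ
        exact (hHres μ hμ).symm
      have hu : IsUnit (A μ₀) := spectrum.notMem_iff.mp hσ
      have hdA : DifferentiableAt ℂ A μ₀ := by
        simp only [hAdef, Algebra.algebraMap_eq_smul_one]
        exact (differentiableAt_id.smul_const _).sub_const _
      have hdinv : DifferentiableAt ℂ (fun μ => Ring.inverse (A μ)) μ₀ :=
        (differentiableAt_inverse hu).comp μ₀ hdA
      exact hev.differentiableAt_iff.mp ((hdinv.mul_const (Φ f)).neg)
  -- bounds at infinity
  obtain ⟨R₀, hR₀⟩ := isBounded_iff_forall_norm_le.mp hK.isBounded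
  obtain ⟨R₁, hR₁⟩ := isBounded_iff_forall_norm_le.mp (spectrum.isBounded Z : Bornology.IsBounded (spectrum ℂ Z))
  set R := max (max R₀ R₁) 0 with hRdef
  have hR0 : (0:ℝ) ≤ R := le_max_right _ _
  have hRK : ∀ w ∈ K, ‖w‖ ≤ R := fun w hw =>
    le_max_of_le_left (le_max_of_le_left (hR₀ w hw))
  have hRσ : ∀ w ∈ spectrum ℂ Z, ‖w‖ ≤ R := fun w hw =>
    le_max_of_le_left (le_max_of_le_right (hR₁ w hw))
  have hnotσ : ∀ μ : ℂ, R + 1 ≤ ‖μ‖ → μ ∉ spectrum ℂ Z := by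
    intro μ h hc
    have := hRσ μ hc
    linarith
  have hout : ∀ μ : ℂ, R + 1 ≤ ‖μ‖ → ‖H μ‖ ≤ ‖Φ‖ * ‖f‖ * (‖μ‖ - R)⁻¹ := by
    intro μ hμ
    have hpos : (0:ℝ) < ‖μ‖ - R := by linarith
    have hμS : μ ∉ S := by
      intro hc
      have := hRK μ (hSK hc)
      linarith
    rw [hHq μ hμS]
    have hq : ‖qc μ‖ ≤ ‖f‖ * (‖μ‖ - R)⁻¹ := by
      apply (ContinuousMap.norm_le _ (by positivity)).mpr
      intro z
      rw [hqc_eq μ hμS z, norm_mul, norm_inv]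
      have hz : ‖(z : ℂ)‖ ≤ R := hRK _ z.2
      have hzb : ‖μ‖ - R ≤ ‖(z : ℂ) - μ‖ := by
        calc ‖μ‖ - R ≤ ‖μ‖ - ‖(z : ℂ)‖ := by linarith
          _ ≤ ‖μ - (z : ℂ)‖ := norm_sub_norm_le _ _
          _ = ‖(z : ℂ) - μ‖ := norm_sub_rev _ _
      gcongr
      exact f.norm_coe_le_norm z
    calc ‖Φ (qc μ)‖ ≤ ‖Φ‖ * ‖qc μ‖ := Φ.le_opNorm _
      _ ≤ ‖Φ‖ * (‖f‖ * (‖μ‖ - R)⁻¹) := by gcongr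
      _ = ‖Φ‖ * ‖f‖ * (‖μ‖ - R)⁻¹ := by ring
  -- H has bounded range, so it is constant (Liouville)
  have hbdd : Bornology.IsBounded (Set.range H) := by
    obtain ⟨M₁, hM₁⟩ := isBounded_iff_forall_norm_le.mp
      (((isCompact_closedBall (0:ℂ) (R + 1)).image hHdiff.continuous).isBounded)
    rw [isBounded_iff_forall_norm_le]
    refine ⟨max M₁ (‖Φ‖ * ‖f‖), ?_⟩
    rintro w ⟨μ, rfl⟩
    by_cases h : ‖μ‖ ≤ R + 1
    · exact le_max_of_le_left (hM₁ _ ⟨μ, by simpa [Metric.mem_closedBall, dist_zero_right], rfl⟩)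
    · push_neg at h
      refine le_max_of_le_right ?_
      calc ‖H μ‖ ≤ ‖Φ‖ * ‖f‖ * (‖μ‖ - R)⁻¹ := hout μ h.le
        _ ≤ ‖Φ‖ * ‖f‖ * (1:ℝ)⁻¹ := by
            gcongr
            have h2 : R + 1 ≤ ‖μ‖ := h.le
            linarith
        _ = ‖Φ‖ * ‖f‖ := by norm_num
  have hconst : ∀ μ ν : ℂ, H μ = H ν := fun μ ν =>
    hHdiff.apply_eq_apply_of_bounded hbdd μ ν
  -- hence H vanishes
  have hνnorm : ‖((R + 2 : ℝ) : ℂ)‖ = R + 2 := by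
    have h2 : (0:ℝ) ≤ R + 2 := by linarith
    rw [Complex.norm_real]
    exact Real.norm_of_nonneg h2
  have hν : ((R + 2 : ℝ) : ℂ) ∉ spectrum ℂ Z := by
    apply hnotσ
    rw [hνnorm]; linarith
  have hHzero : H ((R + 2 : ℝ) : ℂ) = 0 := by
    rw [← norm_le_zero_iff]
    by_contra hcon
    push_neg at hcon
    set ε := ‖H ((R + 2 : ℝ) : ℂ)‖ with hεdef
    have hε : 0 < ε := hcon
    set c := ‖Φ‖ * ‖f‖ with hcdef
    have hc0 : (0:ℝ) ≤ c := by positivity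
    set t := R + 1 + c / (ε / 2) with htdef
    have ht : R + 1 ≤ t := by
      have h9 : 0 ≤ c / (ε / 2) := by positivity
      rw [htdef]
      linarith
    have htnorm : ‖((t : ℝ) : ℂ)‖ = t := by
      have h9 : (0:ℝ) ≤ t := by linarith
      rw [Complex.norm_real]
      exact Real.norm_of_nonneg h9
    have hb : ε ≤ c * (t - R)⁻¹ := by
      rw [hεdef, hconst ((R + 2 : ℝ) : ℂ) ((t : ℝ) : ℂ)]
      have := hout ((t : ℝ) : ℂ) (by rw [htnorm]; exact ht)
      rwa [htnorm] at this
    have hb2 : c * (t - R)⁻¹ ≤ ε / 2 := by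
      have h3 : t - R = 1 + c / (ε / 2) := by rw [htdef]; ring
      rw [h3, mul_comm, inv_mul_le_iff₀ (by positivity)]
      rw [add_mul, one_mul, div_mul_cancel₀ _ (by positivity : (ε / 2 : ℝ) ≠ 0)]
      linarith
    linarith
  -- conclude
  have hu : IsUnit (A ((R + 2 : ℝ) : ℂ)) := spectrum.notMem_iff.mp hν
  have hfin : Ring.inverse (A ((R + 2 : ℝ) : ℂ)) * Φ f = 0 := by
    have h1 := hHres ((R + 2 : ℝ) : ℂ) hν
    rw [hHzero] at h1
    exact neg_eq_zero.mp h1.symm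
  calc Φ f = (A ((R + 2 : ℝ) : ℂ) * Ring.inverse (A ((R + 2 : ℝ) : ℂ))) * Φ f := by
        rw [Ring.mul_inverse_cancel _ hu, one_mul]
    _ = A ((R + 2 : ℝ) : ℂ) * (Ring.inverse (A ((R + 2 : ℝ) : ℂ)) * Φ f) := mul_assoc _ _ _
    _ = 0 := by rw [hfin, mul_zero]

end AuxiliaryLemmas

set_option maxHeartbeats 8000000

variable {X : Type*} [NormedAddCommGroup X] [NormedSpace ℂ X]

/-- `Ψ` is a bounded `C(K)`-calculus for the bounded operator `Z` : a continuous unital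
algebra homomorphism `C(K) → L(X)` mapping the identity function `ι(z) = z` to `Z`. -/
def IsCKCalculus (K : Set ℂ) (Z : X →L[ℂ] X) (Ψ : C(↥K, ℂ) → X →L[ℂ] X) : Prop :=
  (∀ g h : C(↥K, ℂ), Ψ (g + h) = Ψ g + Ψ h) ∧
  (∀ (c : ℂ) (g : C(↥K, ℂ)), Ψ (c • g) = c • Ψ g) ∧
  (∀ g h : C(↥K, ℂ), Ψ (g * h) = Ψ g * Ψ h) ∧
  Ψ 1 = 1 ∧
  (∃ C : ℝ, ∀ g : C(↥K, ℂ), ‖Ψ g‖ ≤ C * ⨆ z : K, ‖g z‖) ∧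
  Ψ ⟨fun z => (z : ℂ), continuous_subtype_val⟩ = Z

/-- **Spectral mapping theorem for a bounded `C(K)`-calculus** (Lemma 3.1(c)). -/
theorem ck_calculus_spectral_mapping [CompleteSpace X]
    (Z : X →L[ℂ] X)
    (K : Set ℂ) (hK : IsCompact K) (hKi : K ⊆ {z : ℂ | z.re = 0})
    (hspec : spectrum ℂ Z ⊆ K)
    (Ψ : C(↥K, ℂ) → X →L[ℂ] X) (hΨ : IsCKCalculus K Z Ψ)
    (g : C(↥K, ℂ)) :
    spectrum ℂ (Ψ g) = {w : ℂ | ∃ z : ↥K, (z : ℂ) ∈ spectrum ℂ Z ∧ g z = w} := by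
  classical
  haveI : CompactSpace ↥K := isCompact_iff_compactSpace.mp hK
  obtain ⟨hadd, hsmul, hmul, hone, ⟨C, hC⟩, hι⟩ := hΨ
  set Φ : C(↥K, ℂ) →L[ℂ] (X →L[ℂ] X) :=
    LinearMap.mkContinuous
      { toFun := Ψ, map_add' := hadd, map_smul' := hsmul } C
      (fun g' => by
        have h1 := hC g'
        rwa [← ContinuousMap.norm_eq_iSup_norm] at h1) with hΦdef
  have hΦΨ : ∀ g' : C(↥K, ℂ), Φ g' = Ψ g' := fun _ => rfl
  have hΦmul : ∀ g' h' : C(↥K, ℂ), Φ (g' * h') = Φ g' * Φ h' := by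
    intro a b; rw [hΦΨ, hΦΨ, hΦΨ]; exact hmul a b
  have hΦone : Φ 1 = 1 := by rw [hΦΨ]; exact hone
  have hΦι : Φ ⟨fun z => (z : ℂ), continuous_subtype_val⟩ = Z := by rw [hΦΨ]; exact hι
  have hconst_smul : ∀ c : ℂ, ContinuousMap.const ↥K c = c • (1 : C(↥K, ℂ)) := by
    intro c; ext z; simp
  have hΨconst : ∀ c : ℂ, Ψ (ContinuousMap.const ↥K c) = algebraMap ℂ (X →L[ℂ] X) c := by
    intro c
    rw [hconst_smul, hsmul, hone, Algebra.algebraMap_eq_smul_one]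
  apply Set.eq_of_subset_of_subset
  · -- spectrum of Ψ g is contained in g(σ(Z))
    intro lam hlam
    by_contra hcon
    simp only [Set.mem_setOf_eq, not_exists, not_and] at hcon
    obtain ⟨δ, hδ0, hδ⟩ : ∃ δ > 0, ∀ z : ↥K, (z : ℂ) ∈ spectrum ℂ Z → 3 * δ ≤ ‖g z - lam‖ := by
      by_cases hne : ∃ z : ↥K, (z : ℂ) ∈ spectrum ℂ Z
      · obtain ⟨z₁, hz₁⟩ := hne
        have hAcl : IsClosed {z : ↥K | (z : ℂ) ∈ spectrum ℂ Z} :=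
          (spectrum.isClosed (𝕜 := ℂ) Z).preimage continuous_subtype_val
        obtain ⟨z₀, hz₀A, hmin⟩ := hAcl.isCompact.exists_isMinOn ⟨z₁, hz₁⟩
          ((continuous_norm.comp (g.continuous.sub continuous_const)).continuousOn)
        have hgz₀ : g z₀ - lam ≠ 0 := sub_ne_zero.mpr (hcon z₀ hz₀A)
        refine ⟨‖g z₀ - lam‖ / 3, div_pos (norm_pos_iff.mpr hgz₀) (by norm_num), ?_⟩
        intro z hz
        have h2 : ‖g z₀ - lam‖ ≤ ‖g z - lam‖ := isMinOn_iff.mp hmin z hz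
        linarith
      · push_neg at hne
        exact ⟨1, one_pos, fun z hz => absurd hz (hne z)⟩
    -- cutoff function
    set φr : ↥K → ℝ := fun z => min 1 (max 0 (‖g z - lam‖ / δ - 1)) with hφrdef
    have hφr_cont : Continuous φr := by fun_prop
    have hφr_le : ∀ z, 0 ≤ φr z ∧ φr z ≤ 1 := fun z =>
      ⟨le_min zero_le_one (le_max_left _ _), min_le_left _ _⟩
    have hφr_one : ∀ z, 2 * δ ≤ ‖g z - lam‖ → φr z = 1 := by
      intro z hz
      have h1 : (1 : ℝ) ≤ ‖g z - lam‖ / δ - 1 := by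
        rw [le_sub_iff_add_le, le_div_iff₀ hδ0]
        linarith
      simp only [hφrdef]
      rw [max_eq_right (le_trans zero_le_one h1), min_eq_left h1]
    have hφr_zero : ∀ z, ‖g z - lam‖ ≤ δ → φr z = 0 := by
      intro z hz
      have h1 : ‖g z - lam‖ / δ - 1 ≤ 0 := by
        rw [sub_nonpos, div_le_one hδ0]; linarith
      simp only [hφrdef]
      rw [max_eq_left h1, min_eq_right zero_le_one]
    set φ : C(↥K, ℂ) := ⟨fun z => ((φr z : ℝ) : ℂ), Complex.continuous_ofReal.comp hφr_cont⟩
      with hφdef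
    set hmap : C(↥K, ℂ) := ⟨fun z =>
        ((φr z : ℝ) : ℂ) * (starRingEnd ℂ) (g z - lam) *
          (((max (‖g z - lam‖ ^ 2) (δ ^ 2) : ℝ) : ℂ))⁻¹, by
      apply Continuous.mul
      · apply Continuous.mul
        · exact Complex.continuous_ofReal.comp hφr_cont
        · exact continuous_star.comp (g.continuous.sub continuous_const)
      · apply Continuous.inv₀
        · exact Complex.continuous_ofReal.comp
            (((continuous_norm.comp (g.continuous.sub continuous_const)).pow 2).max
              continuous_const)
        · intro z
          rw [Complex.ofReal_ne_zero]
          exact ne_of_gt (lt_of_lt_of_le (pow_pos hδ0 2) (le_max_right _ _))⟩ with hhdef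
    have hkey : hmap * (g - ContinuousMap.const ↥K lam) = φ := by
      ext z
      simp only [hhdef, hφdef, ContinuousMap.mul_apply, ContinuousMap.sub_apply,
        ContinuousMap.const_apply, ContinuousMap.coe_mk]
      by_cases hz : δ ≤ ‖g z - lam‖
      · have hmax : max (‖g z - lam‖ ^ 2) (δ ^ 2) = ‖g z - lam‖ ^ 2 :=
          max_eq_left (by nlinarith)
        have hpos : (0 : ℝ) < ‖g z - lam‖ ^ 2 := by nlinarith
        have hne2 : ((‖g z - lam‖ ^ 2 : ℝ) : ℂ) ≠ 0 := by
          rw [Complex.ofReal_ne_zero]; exact ne_of_gt hpos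
        rw [hmax]
        calc ((φr z : ℝ) : ℂ) * (starRingEnd ℂ) (g z - lam) * ((‖g z - lam‖ ^ 2 : ℝ) : ℂ)⁻¹ *
              (g z - lam)
            = ((φr z : ℝ) : ℂ) * ((starRingEnd ℂ) (g z - lam) * (g z - lam)) *
              ((‖g z - lam‖ ^ 2 : ℝ) : ℂ)⁻¹ := by ring
          _ = ((φr z : ℝ) : ℂ) := by
              rw [conj_mul_self', mul_assoc, mul_inv_cancel₀ hne2, mul_one]
      · push_neg at hz
        rw [hφr_zero z hz.le]
        simp
    -- Ψ φ = 1 via calc_vanish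
    have hΨφ_one : Ψ φ = 1 := by
      have h2 : Ψ ((1 : C(↥K, ℂ)) - φ) = 0 := by
        rw [← hΦΨ]
        apply calc_vanish hK Z Φ hΦmul hΦone hΦι
        intro μ hμ hclos
        have hTcl : IsClosed (Subtype.val '' {z : ↥K | ‖g z - lam‖ ≤ 2 * δ}) := by
          apply IsCompact.isClosed
          apply IsCompact.image ?_ continuous_subtype_val
          apply IsClosed.isCompact
          exact isClosed_le (by fun_prop) continuous_const
        have hsub : Subtype.val '' Function.support ((1 : C(↥K, ℂ)) - φ) ⊆
            Subtype.val '' {z : ↥K | ‖g z - lam‖ ≤ 2 * δ} := by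
          apply Set.image_mono
          intro z hz
          by_contra hcz
          simp only [Set.mem_setOf_eq, not_le] at hcz
          apply hz
          have h3 := hφr_one z hcz.le
          simp [ContinuousMap.sub_apply, hφdef, h3]
        obtain ⟨z, hz2, hz3⟩ := closure_minimal hsub hTcl hclos
        have h3δ := hδ z (by rw [hz3]; exact hμ)
        simp only [Set.mem_setOf_eq] at hz2
        linarith
      have h3 : Ψ ((1 : C(↥K, ℂ)) - φ) = 1 - Ψ φ := by
        rw [← hΦΨ, ← hΦΨ, _root_.map_sub, hΦΨ, hΦΨ, hone]
      rw [h3] at h2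
      exact (sub_eq_zero.mp h2).symm
    -- (Ψ g - lam) is invertible
    have hGm : Ψ (g - ContinuousMap.const ↥K lam) = Ψ g - algebraMap ℂ (X →L[ℂ] X) lam := by
      rw [← hΦΨ, _root_.map_sub, hΦΨ, hΦΨ, hΨconst]
    have hE1 : Ψ hmap * Ψ (g - ContinuousMap.const ↥K lam) = 1 := by
      rw [← hmul, hkey, hΨφ_one]
    have hE2 : Ψ (g - ContinuousMap.const ↥K lam) * Ψ hmap = 1 := by
      rw [← hmul, mul_comm (g - ContinuousMap.const ↥K lam) hmap, hkey, hΨφ_one]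
    have hEu : IsUnit (Ψ (g - ContinuousMap.const ↥K lam)) :=
      ⟨⟨Ψ (g - ContinuousMap.const ↥K lam), Ψ hmap, hE2, hE1⟩, rfl⟩
    rw [spectrum.mem_iff] at hlam
    apply hlam
    have h4 : algebraMap ℂ (X →L[ℂ] X) lam - Ψ g = -(Ψ (g - ContinuousMap.const ↥K lam)) := by
      rw [hGm]; abel
    rw [h4]
    exact hEu.neg
  · -- g(σ(Z)) ⊆ spectrum of Ψ g
    rintro w ⟨z₀, hz₀, rfl⟩
    by_contra hcon
    have hu : IsUnit (algebraMap ℂ (X →L[ℂ] X) (g z₀) - Ψ g) := spectrum.notMem_iff.mp hcon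
    obtain ⟨u, hu_eq⟩ := hu
    set Rop : X →L[ℂ] X := ↑u⁻¹ with hRopdef
    set ε : ℝ := (2 * (‖Rop‖ * ‖Φ‖ + 1))⁻¹ with hεdef
    have hε0 : 0 < ε := by positivity
    obtain ⟨δ', hδ'0, hδ'⟩ := Metric.continuousAt_iff.mp g.continuous.continuousAt ε hε0
    set δ : ℝ := δ' / 3 with hδdef
    have hδ0 : 0 < δ := by positivity
    -- bump function at z₀
    set φr : ↥K → ℝ := fun z => min 1 (max 0 (2 - ‖(z : ℂ) - (z₀ : ℂ)‖ / δ)) with hφrdef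
    have hφr_cont : Continuous φr := by fun_prop
    have hφr_le : ∀ z, 0 ≤ φr z ∧ φr z ≤ 1 := fun z =>
      ⟨le_min zero_le_one (le_max_left _ _), min_le_left _ _⟩
    have hφr_one : ∀ z : ↥K, ‖(z : ℂ) - (z₀ : ℂ)‖ ≤ δ → φr z = 1 := by
      intro z hz
      have h1 : (1 : ℝ) ≤ 2 - ‖(z : ℂ) - (z₀ : ℂ)‖ / δ := by
        rw [le_sub_iff_add_le, add_comm, ← le_sub_iff_add_le]
        rw [div_le_iff₀ hδ0]
        linarith
      simp only [hφrdef]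
      rw [max_eq_right (le_trans zero_le_one h1), min_eq_left h1]
    have hφr_zero : ∀ z : ↥K, 2 * δ ≤ ‖(z : ℂ) - (z₀ : ℂ)‖ → φr z = 0 := by
      intro z hz
      have h1 : 2 - ‖(z : ℂ) - (z₀ : ℂ)‖ / δ ≤ 0 := by
        rw [sub_nonpos, le_div_iff₀ hδ0]
        linarith
      simp only [hφrdef]
      rw [max_eq_left h1, min_eq_right zero_le_one]
    set φ : C(↥K, ℂ) := ⟨fun z => ((φr z : ℝ) : ℂ), Complex.continuous_ofReal.comp hφr_cont⟩
      with hφdef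
    set umap : C(↥K, ℂ) := ⟨fun z =>
        (1 - ((φr z : ℝ) : ℂ)) * (starRingEnd ℂ) ((z : ℂ) - (z₀ : ℂ)) *
          (((max (‖(z : ℂ) - (z₀ : ℂ)‖ ^ 2) (δ ^ 2) : ℝ) : ℂ))⁻¹, by
      apply Continuous.mul
      · apply Continuous.mul
        · exact continuous_const.sub (Complex.continuous_ofReal.comp hφr_cont)
        · exact continuous_star.comp (continuous_subtype_val.sub continuous_const)
      · apply Continuous.inv₀
        · exact Complex.continuous_ofReal.comp
            (((continuous_norm.comp (continuous_subtype_val.sub continuous_const)).pow 2).max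
              continuous_const)
        · intro z
          rw [Complex.ofReal_ne_zero]
          exact ne_of_gt (lt_of_lt_of_le (pow_pos hδ0 2) (le_max_right _ _))⟩ with humdef
    set idm : C(↥K, ℂ) := ⟨fun z => (z : ℂ), continuous_subtype_val⟩ with hidmdef
    have hkey : umap * (idm - ContinuousMap.const ↥K (z₀ : ℂ)) = 1 - φ := by
      ext z
      simp only [humdef, hφdef, hidmdef, ContinuousMap.mul_apply, ContinuousMap.sub_apply,
        ContinuousMap.const_apply, ContinuousMap.coe_mk, ContinuousMap.one_apply]
      by_cases hz : δ ≤ ‖(z : ℂ) - (z₀ : ℂ)‖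
      · have hmax : max (‖(z : ℂ) - (z₀ : ℂ)‖ ^ 2) (δ ^ 2) = ‖(z : ℂ) - (z₀ : ℂ)‖ ^ 2 :=
          max_eq_left (by nlinarith)
        have hpos : (0 : ℝ) < ‖(z : ℂ) - (z₀ : ℂ)‖ ^ 2 := by nlinarith
        have hne2 : ((‖(z : ℂ) - (z₀ : ℂ)‖ ^ 2 : ℝ) : ℂ) ≠ 0 := by
          rw [Complex.ofReal_ne_zero]; exact ne_of_gt hpos
        rw [hmax]
        calc (1 - ((φr z : ℝ) : ℂ)) * (starRingEnd ℂ) ((z : ℂ) - (z₀ : ℂ)) *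
              ((‖(z : ℂ) - (z₀ : ℂ)‖ ^ 2 : ℝ) : ℂ)⁻¹ * ((z : ℂ) - (z₀ : ℂ))
            = (1 - ((φr z : ℝ) : ℂ)) *
              ((starRingEnd ℂ) ((z : ℂ) - (z₀ : ℂ)) * ((z : ℂ) - (z₀ : ℂ))) *
              ((‖(z : ℂ) - (z₀ : ℂ)‖ ^ 2 : ℝ) : ℂ)⁻¹ := by ring
          _ = 1 - ((φr z : ℝ) : ℂ) := by
              rw [conj_mul_self', mul_assoc, mul_inv_cancel₀ hne2, mul_one]
      · push_neg at hz
        rw [hφr_one z hz.le]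
        simp
    -- norm estimate for Ψ φ
    have hF : Ψ (ContinuousMap.const ↥K (g z₀) - g) = ↑u := by
      rw [← hΦΨ, _root_.map_sub, hΦΨ, hΦΨ, hΨconst, ← hu_eq]
    have hFφ : ‖(ContinuousMap.const ↥K (g z₀) - g) * φ‖ ≤ ε := by
      apply (ContinuousMap.norm_le _ hε0.le).mpr
      intro z
      simp only [ContinuousMap.mul_apply, ContinuousMap.sub_apply, ContinuousMap.const_apply,
        hφdef, ContinuousMap.coe_mk]
      by_cases hz : 2 * δ ≤ ‖(z : ℂ) - (z₀ : ℂ)‖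
      · rw [hφr_zero z hz]
        simp [hε0.le]
      · push_neg at hz
        have hdist : dist z z₀ < δ' := by
          rw [Subtype.dist_eq, dist_eq_norm]
          rw [hδdef] at hz
          linarith
        have hgg := hδ' hdist
        rw [dist_eq_norm] at hgg
        have h5 : ‖g z₀ - g z‖ < ε := by rwa [norm_sub_rev] at hgg
        calc ‖(g z₀ - g z) * ((φr z : ℝ) : ℂ)‖ = ‖g z₀ - g z‖ * ‖((φr z : ℝ) : ℂ)‖ :=
              norm_mul _ _
          _ ≤ ‖g z₀ - g z‖ * 1 := by
              apply mul_le_mul_of_nonneg_left ?_ (norm_nonneg _)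
              rw [Complex.norm_real, Real.norm_eq_abs, abs_le]
              exact ⟨by linarith [(hφr_le z).1], (hφr_le z).2⟩
          _ ≤ ε := by rw [mul_one]; exact h5.le
    have hΨφ_small : ‖Ψ φ‖ < 1 := by
      have h6 : Ψ φ = Rop * Ψ ((ContinuousMap.const ↥K (g z₀) - g) * φ) := by
        calc Ψ φ = 1 * Ψ φ := (one_mul _).symm
          _ = (Rop * ↑u) * Ψ φ := by rw [hRopdef, Units.inv_mul]
          _ = Rop * (↑u * Ψ φ) := mul_assoc _ _ _
          _ = Rop * (Ψ (ContinuousMap.const ↥K (g z₀) - g) * Ψ φ) := by rw [hF]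
          _ = Rop * Ψ ((ContinuousMap.const ↥K (g z₀) - g) * φ) := by rw [hmul]
      have h7 : ‖Ψ φ‖ ≤ ‖Rop‖ * (‖Φ‖ * ε) := by
        rw [h6]
        calc ‖Rop * Ψ ((ContinuousMap.const ↥K (g z₀) - g) * φ)‖
            ≤ ‖Rop‖ * ‖Ψ ((ContinuousMap.const ↥K (g z₀) - g) * φ)‖ := norm_mul_le _ _
          _ ≤ ‖Rop‖ * (‖Φ‖ * ε) := by
              apply mul_le_mul_of_nonneg_left ?_ (norm_nonneg _)
              rw [← hΦΨ]
              calc ‖Φ ((ContinuousMap.const ↥K (g z₀) - g) * φ)‖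
                  ≤ ‖Φ‖ * ‖(ContinuousMap.const ↥K (g z₀) - g) * φ‖ := Φ.le_opNorm _
                _ ≤ ‖Φ‖ * ε := by gcongr
      have h8 : ‖Rop‖ * (‖Φ‖ * ε) ≤ 1 / 2 := by
        rw [hεdef]
        rw [← mul_assoc]
        have h9 : (0:ℝ) < ‖Rop‖ * ‖Φ‖ + 1 := by positivity
        calc ‖Rop‖ * ‖Φ‖ * (2 * (‖Rop‖ * ‖Φ‖ + 1))⁻¹
            ≤ (‖Rop‖ * ‖Φ‖ + 1) * (2 * (‖Rop‖ * ‖Φ‖ + 1))⁻¹ := by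
              apply mul_le_mul_of_nonneg_right (by linarith) (by positivity)
          _ = 1 / 2 := by field_simp
      linarith
    set V : (X →L[ℂ] X)ˣ := Units.oneSub (Ψ φ) hΨφ_small with hVdef
    have hVval : (↑V : X →L[ℂ] X) = 1 - Ψ φ := rfl
    have hone_sub : Ψ ((1 : C(↥K, ℂ)) - φ) = 1 - Ψ φ := by
      rw [← hΦΨ, _root_.map_sub, hΦΨ, hΦΨ, hone]
    set B : X →L[ℂ] X := Ψ (idm - ContinuousMap.const ↥K (z₀ : ℂ)) with hBdef
    have hleft : Ψ umap * B = 1 - Ψ φ := by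
      rw [hBdef, ← hmul, hkey, hone_sub]
    have hright : B * Ψ umap = 1 - Ψ φ := by
      rw [hBdef, ← hmul, mul_comm (idm - ContinuousMap.const ↥K (z₀ : ℂ)) umap, hkey, hone_sub]
    have hcomm : Commute B (↑V : X →L[ℂ] X) := by
      rw [hVval, ← hone_sub, hBdef]
      unfold Commute SemiconjBy
      rw [← hmul, ← hmul, mul_comm ((1 : C(↥K, ℂ)) - φ) (idm - ContinuousMap.const ↥K (z₀ : ℂ))]
    have hcomm' : Commute B (↑V⁻¹ : X →L[ℂ] X) := hcomm.units_inv_right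
    have hBu : IsUnit B := by
      refine ⟨⟨B, Ψ umap * ↑V⁻¹, ?_, ?_⟩, rfl⟩
      · calc B * (Ψ umap * ↑V⁻¹) = (B * Ψ umap) * ↑V⁻¹ := (mul_assoc _ _ _).symm
          _ = ↑V * ↑V⁻¹ := by rw [hright, hVval]
          _ = 1 := V.mul_inv
      · calc (Ψ umap * ↑V⁻¹) * B = Ψ umap * (↑V⁻¹ * B) := mul_assoc _ _ _
          _ = Ψ umap * (B * ↑V⁻¹) := by rw [hcomm'.eq]
          _ = (Ψ umap * B) * ↑V⁻¹ := (mul_assoc _ _ _).symm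
          _ = ↑V * ↑V⁻¹ := by rw [hleft, hVval]
          _ = 1 := V.mul_inv
    rw [spectrum.mem_iff] at hz₀
    apply hz₀
    have hBZ : B = Z - algebraMap ℂ (X →L[ℂ] X) (z₀ : ℂ) := by
      rw [hBdef, ← hΦΨ, _root_.map_sub, hΦΨ, hΦΨ, hΨconst, hidmdef, hι]
    have h10 : algebraMap ℂ (X →L[ℂ] X) (z₀ : ℂ) - Z = -B := by
      rw [hBZ]; abel
    rw [h10]
    exact hBu.neg
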